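/- Let B be an n-fold Blaschke product with zeros z_1,…,z_n in the open unit disk, λ on the unit circle, and w_1,…,w_{n+1} the solutions of w·B(w) = conj(λ). Then the partial fraction decomposition B(z)/(zB(z) − conj(λ)) = Σ_{j=1}^{n+1} m_j/(z − w_j) holds with all m_j > 0 and Σ m_j = 1; explicitly m_j = [1 + Σ_{k=1}^n (1 − |z_k|²)/|w_j − z_k|²]^{−1}. -/

import Mathlib

open Finset

open Polynomial in
lemma my_derivative_prod {ι : Type*} [DecidableEq ι] (s : Finset ι) (f : ι → Polynomial ℂ) :
    Polynomial.derivative (∏ i ∈ s, f i)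
      = ∑ i ∈ s, (∏ j ∈ s.erase i, f j) * Polynomial.derivative (f i) := by
  induction s using Finset.induction_on with
  | empty => simp
  | insert _ _ hat ih =>
    rename_i a t
    rw [prod_insert hat, derivative_mul, ih, sum_insert hat, erase_insert hat, mul_sum]
    congr 1
    · exact mul_comm _ _
    refine sum_congr rfl fun j hj => ?_
    rw [t.erase_insert_of_ne (ne_of_mem_of_not_mem hj hat).symm,
      prod_insert (fun h => hat (mem_of_mem_erase h))]
    ring

lemma blaschke_term (wj zk : ℂ) (hw : ‖wj‖ = 1) (hne : wj - zk ≠ 0)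
    (hd : 1 - (starRingEnd ℂ) zk * wj ≠ 0) :
    wj / (wj - zk) + wj * (starRingEnd ℂ) zk / (1 - (starRingEnd ℂ) zk * wj)
      = (((1 - ‖zk‖ ^ 2) / ‖wj - zk‖ ^ 2 : ℝ) : ℂ) := by
  have hw0 : wj ≠ 0 := by intro h; rw [h] at hw; simp at hw
  have hca : (starRingEnd ℂ) (wj - zk) ≠ 0 := by
    rw [starRingEnd_apply]; exact star_ne_zero.mpr hne
  have hmc : ∀ u : ℂ, u * (starRingEnd ℂ) u = ((‖u‖ : ℂ)) ^ 2 := fun u => by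
    rw [Complex.mul_conj, Complex.normSq_eq_norm_sq]; push_cast; ring
  have h1 : (starRingEnd ℂ) wj * wj = 1 := by
    rw [mul_comm, hmc, hw]; norm_num
  have hd' : 1 - (starRingEnd ℂ) zk * wj = (starRingEnd ℂ) (wj - zk) * wj := by
    rw [map_sub, sub_mul, h1]
  push_cast
  rw [hd', ← hmc (wj - zk), ← hmc zk,
    mul_comm ((starRingEnd ℂ) (wj - zk)) wj, mul_div_mul_left _ _ hw0,
    div_add_div _ _ hne hca]
  congr 1
  rw [map_sub]
  linear_combination h1

open Polynomial Lagrange in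
/-- Partial fraction expansion of `B(z)/(zB(z) − conj λ)` for a finite Blaschke product `B`:
the coefficients `m_j` are positive, sum to one, and are given by the explicit formula
`m_j = [1 + Σ_k (1 − |z_k|²)/|w_j − z_k|²]⁻¹`. -/
theorem blaschke_partial_fractions
    (n : ℕ) (z : Fin n → ℂ) (hz : ∀ k, ‖z k‖ < 1)
    (lam : ℂ) (hlam : ‖lam‖ = 1)
    (w : Fin (n + 1) → ℂ) (hwinj : Function.Injective w)
    (hwcirc : ∀ j, ‖w j‖ = 1)
    (hwsol : ∀ j, w j * ∏ k, (w j - z k) / (1 - (starRingEnd ℂ) (z k) * w j)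
        = (starRingEnd ℂ) lam) :
    ∃ m : Fin (n + 1) → ℝ,
      (∀ j, m j = (1 + ∑ k, (1 - ‖z k‖ ^ 2) / ‖w j - z k‖ ^ 2)⁻¹) ∧
      (∀ j, 0 < m j) ∧ (∑ j, m j = 1) ∧
      (∀ ζ : ℂ, (∀ j, ζ ≠ w j) → (∀ k, 1 - (starRingEnd ℂ) (z k) * ζ ≠ 0) →
        (∏ k, (ζ - z k) / (1 - (starRingEnd ℂ) (z k) * ζ))
            / (ζ * ∏ k, (ζ - z k) / (1 - (starRingEnd ℂ) (z k) * ζ) - (starRingEnd ℂ) lam)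
          = ∑ j, (m j : ℂ) / (ζ - w j)) := by
  classical
  -- basic nonvanishing facts
  have hwz : ∀ (j : Fin (n+1)) (k : Fin n), w j - z k ≠ 0 := by
    intro j k h
    rw [sub_eq_zero] at h
    have := hz k
    rw [← h, hwcirc j] at this
    exact lt_irrefl 1 this
  have hden : ∀ (u : ℂ), ‖u‖ = 1 → ∀ k, 1 - (starRingEnd ℂ) (z k) * u ≠ 0 := by
    intro u hu k h
    rw [sub_eq_zero] at h
    have h2 : ‖(1 : ℂ)‖ = ‖(starRingEnd ℂ) (z k) * u‖ := by rw [h]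
    rw [norm_one, norm_mul, RCLike.norm_conj, hu, mul_one] at h2
    have h3 := hz k
    rw [← h2] at h3
    exact lt_irrefl 1 h3
  -- the three polynomials
  set Q : ℂ[X] := nodal Finset.univ z with hQdef
  set R : ℂ[X] := ∏ k, (1 - C ((starRingEnd ℂ) (z k)) * X) with hRdef
  set Pe : ℂ[X] := nodal Finset.univ w with hPedef
  have hQe : ∀ u : ℂ, Q.eval u = ∏ k, (u - z k) := fun u => eval_nodal
  have hRe : ∀ u : ℂ, R.eval u = ∏ k, (1 - (starRingEnd ℂ) (z k) * u) := fun u => by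
    rw [hRdef, eval_prod]; simp
  have hQne : ∀ j, Q.eval (w j) ≠ 0 := fun j => by
    rw [hQe]; exact prod_ne_zero_iff.mpr fun k _ => hwz j k
  have hRne : ∀ u : ℂ, (∀ k, 1 - (starRingEnd ℂ) (z k) * u ≠ 0) → R.eval u ≠ 0 := by
    intro u hu
    rw [hRe]; exact prod_ne_zero_iff.mpr fun k _ => hu k
  have hprod : ∀ u : ℂ, (∀ k, 1 - (starRingEnd ℂ) (z k) * u ≠ 0) →
      (∏ k, (u - z k) / (1 - (starRingEnd ℂ) (z k) * u)) = Q.eval u / R.eval u := by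
    intro u hu
    rw [prod_div_distrib, hQe, hRe]
  have hkey : ∀ j, w j * Q.eval (w j) = (starRingEnd ℂ) lam * R.eval (w j) := by
    intro j
    have h := hwsol j
    rw [hprod (w j) (hden (w j) (hwcirc j)), ← mul_div_assoc,
      div_eq_iff (hRne (w j) (hden (w j) (hwcirc j)))] at h
    exact h
  have hvs : Set.InjOn w ↑(Finset.univ : Finset (Fin (n+1))) := hwinj.injOn
  have hcard : (#(Finset.univ : Finset (Fin (n+1)))) = n + 1 := by simp
  -- degree bookkeeping
  have hQmonic : Q.Monic := nodal_monic
  have hQdeg : Q.natDegree = n := by rw [hQdef, natDegree_nodal]; simp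
  have hPemonic : Pe.Monic := nodal_monic
  have hPedeg : Pe.natDegree = n + 1 := by rw [hPedef, natDegree_nodal]; simp
  have hXQmonic : (X * Q).Monic := monic_X.mul hQmonic
  have hXQdeg : (X * Q).natDegree = n + 1 := by
    rw [monic_X.natDegree_mul hQmonic, natDegree_X, hQdeg, add_comm]
  have hRnat : R.natDegree ≤ n := by
    rw [hRdef]
    have h1 : ∑ k : Fin n, (1 - C ((starRingEnd ℂ) (z k)) * X).natDegree
        ≤ ∑ _k : Fin n, 1 :=
      Finset.sum_le_sum fun k _ => by compute_degree
    simpa using le_trans (natDegree_prod_le _ _) h1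
  have hRdeglt : R.degree < ((n + 1 : ℕ) : WithBot ℕ) := by
    refine lt_of_le_of_lt degree_le_natDegree ?_
    exact_mod_cast Nat.lt_succ_of_le hRnat
  -- the key polynomial identity
  have hpoly : X * Q - C ((starRingEnd ℂ) lam) * R = Pe := by
    have hD0 : (X * Q - Pe) - C ((starRingEnd ℂ) lam) * R = 0 := by
      apply eq_zero_of_degree_lt_of_eval_index_eq_zero (v := w) Finset.univ hvs
      · rw [hcard]
        refine lt_of_le_of_lt (degree_sub_le _ _) (max_lt ?_ ?_)
        · have h1 : (X * Q).degree = Pe.degree := by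
            rw [degree_eq_natDegree hXQmonic.ne_zero, degree_eq_natDegree hPemonic.ne_zero,
              hXQdeg, hPedeg]
          have h2 : (X * Q - Pe).degree < (X * Q).degree :=
            degree_sub_lt h1 hXQmonic.ne_zero (by rw [hXQmonic.leadingCoeff, hPemonic.leadingCoeff])
          calc (X * Q - Pe).degree < (X * Q).degree := h2
            _ = ((n + 1 : ℕ) : WithBot ℕ) := by
                rw [degree_eq_natDegree hXQmonic.ne_zero, hXQdeg]
        · refine lt_of_le_of_lt ?_ hRdeglt
          calc (C ((starRingEnd ℂ) lam) * R).degree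
              ≤ (C ((starRingEnd ℂ) lam)).degree + R.degree := degree_mul_le _ _
            _ ≤ 0 + R.degree := add_le_add degree_C_le le_rfl
            _ = R.degree := zero_add _
      · intro i _
        have hp : Pe.eval (w i) = 0 := eval_nodal_at_node (Finset.mem_univ i)
        simp only [eval_sub, eval_mul, eval_X, eval_C, hp]
        linear_combination hkey i
    linear_combination hD0
  -- derivative computations
  have hderivPe : derivative Pe = Q + X * derivative Q - C ((starRingEnd ℂ) lam) * derivative R := by
    rw [← hpoly, derivative_sub, derivative_mul, derivative_mul, derivative_X, derivative_C]
    ring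
  have hQ' : ∀ j, (derivative Q).eval (w j) = Q.eval (w j) * ∑ k, (w j - z k)⁻¹ := by
    intro j
    rw [hQdef, derivative_nodal, eval_finset_sum, mul_sum]
    refine sum_congr rfl fun k _ => ?_
    rw [eval_nodal, ← hQdef, eq_mul_inv_iff_mul_eq₀ (hwz j k), hQe, mul_comm]
    exact Finset.mul_prod_erase Finset.univ (fun l => w j - z l) (Finset.mem_univ k)
  have hR' : ∀ j, (derivative R).eval (w j)
      = R.eval (w j) * ∑ k, -((starRingEnd ℂ) (z k)) * (1 - (starRingEnd ℂ) (z k) * w j)⁻¹ := by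
    intro j
    rw [hRdef, my_derivative_prod, eval_finset_sum, mul_sum]
    refine sum_congr rfl fun k _ => ?_
    have hder : derivative (1 - C ((starRingEnd ℂ) (z k)) * X) = -C ((starRingEnd ℂ) (z k)) := by
      simp
    have hpe : (∏ x ∈ Finset.univ.erase k, (1 - (starRingEnd ℂ) (z x) * w j))
        = (1 - (starRingEnd ℂ) (z k) * w j)⁻¹ * R.eval (w j) := by
      rw [hRe, ← Finset.mul_prod_erase Finset.univ
        (fun l => 1 - (starRingEnd ℂ) (z l) * w j) (Finset.mem_univ k),
        inv_mul_cancel_left₀ (hden (w j) (hwcirc j) k)]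
    rw [hder, eval_mul, eval_neg, eval_C, eval_prod]
    simp only [eval_sub, eval_one, eval_mul, eval_C, eval_X]
    rw [hpe]
    ring
  -- the value of the derivative of Pe at the nodes
  have hPe' : ∀ j, (derivative Pe).eval (w j)
      = Q.eval (w j) * (((1 + ∑ k, (1 - ‖z k‖ ^ 2) / ‖w j - z k‖ ^ 2 : ℝ)) : ℂ) := by
    intro j
    have hcast : (((1 + ∑ k, (1 - ‖z k‖ ^ 2) / ‖w j - z k‖ ^ 2 : ℝ)) : ℂ)
        = 1 + ∑ k, (w j / (w j - z k)
            + w j * (starRingEnd ℂ) (z k) / (1 - (starRingEnd ℂ) (z k) * w j)) := by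
      rw [Complex.ofReal_add, Complex.ofReal_one, Complex.ofReal_sum]
      congr 1
      exact Finset.sum_congr rfl fun k _ =>
        (blaschke_term (w j) (z k) (hwcirc j) (hwz j k) (hden (w j) (hwcirc j) k)).symm
    simp only [hderivPe, eval_sub, eval_add, eval_mul, eval_X, eval_C]
    rw [hQ' j, hR' j, hcast, ← mul_assoc ((starRingEnd ℂ) lam), ← hkey j, mul_add, mul_one]
    simp only [Finset.mul_sum]
    rw [add_sub_assoc, ← Finset.sum_sub_distrib]
    congr 1
    refine sum_congr rfl fun k _ => ?_
    rw [div_eq_mul_inv, div_eq_mul_inv]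
    ring
  -- positivity of the coefficients
  have hspos : ∀ j, 0 < 1 + ∑ k, (1 - ‖z k‖ ^ 2) / ‖w j - z k‖ ^ 2 := by
    intro j
    have h0 : 0 ≤ ∑ k, (1 - ‖z k‖ ^ 2) / ‖w j - z k‖ ^ 2 :=
      Finset.sum_nonneg fun k _ =>
        div_nonneg (by nlinarith [hz k, norm_nonneg (z k)]) (by positivity)
    linarith
  -- the nodal weights are exactly the coefficients `m j`
  have hweight : ∀ j, nodalWeight Finset.univ w j * Q.eval (w j)
      = (((1 + ∑ k, (1 - ‖z k‖ ^ 2) / ‖w j - z k‖ ^ 2)⁻¹ : ℝ) : ℂ) := by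
    intro j
    rw [nodalWeight_eq_eval_derivative_nodal (Finset.mem_univ j), ← hPedef, hPe' j,
      Complex.ofReal_inv, mul_inv, mul_comm, ← mul_assoc, mul_inv_cancel₀ (hQne j), one_mul]
  -- interpolation of Q at the nodes
  have hQdegree : Q.degree = (n : WithBot ℕ) := by rw [hQdef, degree_nodal]; simp
  have hinterp : Q = interpolate Finset.univ w (fun i => Q.eval (w i)) := by
    refine eq_interpolate hvs ?_
    rw [hQdegree, hcard]
    exact_mod_cast Nat.lt_succ_self n
  -- sum of the coefficients is one (leading coefficient comparison)
  have hcoeff : Q.coeff n = 1 := by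
    have := hQmonic.coeff_natDegree
    rwa [hQdeg] at this
  have hcoeff2 : Q.coeff n = ∑ j, Q.eval (w j) * nodalWeight Finset.univ w j := by
    conv_lhs => rw [hinterp]
    rw [interpolate_apply, finset_sum_coeff]
    refine sum_congr rfl fun j _ => ?_
    rw [coeff_C_mul, basis_eq_prod_sub_inv_mul_nodal_div (Finset.mem_univ j),
      ← nodal_erase_eq_nodal_div (Finset.mem_univ j), coeff_C_mul]
    have hm : (nodal (Finset.univ.erase j) w).coeff n = 1 := by
      have h1 : (nodal (Finset.univ.erase j) w).natDegree = n := by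
        rw [natDegree_nodal, card_erase_of_mem (Finset.mem_univ j), hcard]
        omega
      have := (nodal_monic (s := Finset.univ.erase j) (v := w)).coeff_natDegree
      rwa [h1] at this
    rw [hm, mul_one]
  have hsum1 : ∑ j, (((1 + ∑ k, (1 - ‖z k‖ ^ 2) / ‖w j - z k‖ ^ 2)⁻¹ : ℝ) : ℂ) = 1 := by
    calc ∑ j, (((1 + ∑ k, (1 - ‖z k‖ ^ 2) / ‖w j - z k‖ ^ 2)⁻¹ : ℝ) : ℂ)
        = ∑ j, Q.eval (w j) * nodalWeight Finset.univ w j :=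
          sum_congr rfl fun j _ => by rw [← hweight j, mul_comm]
      _ = Q.coeff n := hcoeff2.symm
      _ = 1 := hcoeff
  refine ⟨fun j => (1 + ∑ k, (1 - ‖z k‖ ^ 2) / ‖w j - z k‖ ^ 2)⁻¹, fun j => rfl,
    fun j => inv_pos.mpr (hspos j), ?_, ?_⟩
  · exact_mod_cast hsum1
  -- the partial fraction identity
  intro ζ hζw hζd
  have hPene : Pe.eval ζ ≠ 0 := by
    rw [hPedef]; exact eval_nodal_not_at_node (fun i _ => hζw i)
  have hRζ : R.eval ζ ≠ 0 := hRne ζ hζd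
  have hBden : ζ * (∏ k, (ζ - z k) / (1 - (starRingEnd ℂ) (z k) * ζ)) - (starRingEnd ℂ) lam
      = Pe.eval ζ / R.eval ζ := by
    rw [hprod ζ hζd, ← hpoly]
    simp only [eval_sub, eval_mul, eval_X, eval_C]
    field_simp
  have hev : Q.eval ζ
      = Pe.eval ζ * ∑ j, nodalWeight Finset.univ w j * (ζ - w j)⁻¹ * Q.eval (w j) := by
    conv_lhs => rw [hinterp]
    rw [eval_interpolate_not_at_node _ (fun i _ => hζw i), ← hPedef]
  have hdc : Q.eval ζ / R.eval ζ / (Pe.eval ζ / R.eval ζ) = Q.eval ζ / Pe.eval ζ := by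
    field_simp
  rw [hBden, hprod ζ hζd, hdc, hev, mul_div_cancel_left₀ _ hPene]
  refine sum_congr rfl fun j _ => ?_
  rw [div_eq_mul_inv, ← hweight j]
  ring
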